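/- If B¹ is an ℵ₁-compact Boolean subalgebra of a Boolean algebra C, z ∈ C, and B² is the subalgebra of C generated by B¹ ∪ {z}, then B² is ℵ₁-compact. -/
import Mathlib


variable {C : Type*} [BooleanAlgebra C]

/-- `S` is (the underlying set of) a Boolean subalgebra. -/
def IsSubalg (S : Set C) : Prop :=
  ⊥ ∈ S ∧ ⊤ ∈ S ∧ (∀ a ∈ S, ∀ b ∈ S, a ⊔ b ∈ S) ∧
    (∀ a ∈ S, ∀ b ∈ S, a ⊓ b ∈ S) ∧ (∀ a ∈ S, aᶜ ∈ S)

/-- `S` is ℵ₁-compact: for every pairwise disjoint sequence `dₙ` from `S` there is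
`x ∈ S` with `x ⊓ d_{2n+1} = ⊥` and `x ⊓ d_{2n} = d_{2n}` for all `n`. -/
def Aleph1Compact (S : Set C) : Prop :=
  ∀ d : ℕ → C, (∀ n, d n ∈ S) → (∀ m n, m ≠ n → Disjoint (d m) (d n)) →
    ∃ x ∈ S, ∀ n, x ⊓ d (2 * n + 1) = ⊥ ∧ x ⊓ d (2 * n) = d (2 * n)

private lemma key_prod (z u v p q : C) :
    ((u ⊓ z) ⊔ (v \ z)) ⊓ ((p ⊓ z) ⊔ (q \ z)) = ((u ⊓ p) ⊓ z) ⊔ ((v ⊓ q) \ z) := by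
  have h1 : (u ⊓ z) ⊓ (q \ z) = ⊥ := by
    rw [sdiff_eq]
    calc (u ⊓ z) ⊓ (q ⊓ zᶜ) = (u ⊓ q) ⊓ (z ⊓ zᶜ) := by ac_rfl
    _ = ⊥ := by simp
  have h2 : (v \ z) ⊓ (p ⊓ z) = ⊥ := by
    rw [sdiff_eq]
    calc (v ⊓ zᶜ) ⊓ (p ⊓ z) = (v ⊓ p) ⊓ (z ⊓ zᶜ) := by ac_rfl
    _ = ⊥ := by simp
  have h3 : (u ⊓ z) ⊓ (p ⊓ z) = (u ⊓ p) ⊓ z := by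
    calc (u ⊓ z) ⊓ (p ⊓ z) = (u ⊓ p) ⊓ (z ⊓ z) := by ac_rfl
    _ = (u ⊓ p) ⊓ z := by rw [inf_idem]
  have h4 : (v \ z) ⊓ (q \ z) = (v ⊓ q) \ z := by
    rw [sdiff_eq, sdiff_eq, sdiff_eq]
    calc (v ⊓ zᶜ) ⊓ (q ⊓ zᶜ) = (v ⊓ q) ⊓ (zᶜ ⊓ zᶜ) := by ac_rfl
    _ = (v ⊓ q) ⊓ zᶜ := by rw [inf_idem]
  rw [inf_sup_left, inf_sup_right, inf_sup_right, h1, h2, h3, h4, sup_bot_eq, bot_sup_eq]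

/-- Subtracting the sup of earlier terms doesn't change the `⊓ w` part, provided the
`⊓ w` parts are pairwise disjoint. -/
private lemma key_trunc (w : C) (f : ℕ → C)
    (hf : ∀ m n, m ≠ n → (f m ⊓ w) ⊓ (f n ⊓ w) = ⊥) (n : ℕ) :
    (f n \ (Finset.range n).sup f) ⊓ w = f n ⊓ w := by
  have hd : Disjoint (f n ⊓ w) ((Finset.range n).sup f) := by
    rw [Finset.disjoint_sup_right]
    intro m hm
    rw [disjoint_iff]
    calc (f n ⊓ w) ⊓ f m = (f n ⊓ w) ⊓ (f m ⊓ w) := by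
          calc (f n ⊓ w) ⊓ f m = (f n ⊓ f m) ⊓ w := by ac_rfl
          _ = (f n ⊓ f m) ⊓ (w ⊓ w) := by rw [inf_idem]
          _ = (f n ⊓ w) ⊓ (f m ⊓ w) := by ac_rfl
    _ = ⊥ := hf n m (Finset.mem_range.mp hm).ne'
  have hle : f n ⊓ w ≤ ((Finset.range n).sup f)ᶜ := hd.le_compl_right
  calc (f n \ (Finset.range n).sup f) ⊓ w
      = (f n ⊓ w) ⊓ ((Finset.range n).sup f)ᶜ := by rw [sdiff_eq]; ac_rfl
  _ = f n ⊓ w := inf_eq_left.mpr hle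

/-- If `B¹` is an ℵ₁-compact subalgebra of `C` and `z ∈ C`, then the subalgebra generated
by `B¹ ∪ {z}` (whose elements are exactly those of the form `(d¹ ⊓ z) ⊔ (d² \ z)` with
`d¹, d² ∈ B¹`) is ℵ₁-compact. -/
theorem aleph1Compact_extend (B1 : Set C) (hB1 : IsSubalg B1)
    (z : C) (hcompact : Aleph1Compact B1) :
    Aleph1Compact {w | ∃ d₁ ∈ B1, ∃ d₂ ∈ B1, w = (d₁ ⊓ z) ⊔ (d₂ \ z)} := by
  obtain ⟨hbot, htop, hsupm, hinfm, hcomplm⟩ := hB1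
  intro d hd hdisj
  choose a ha b hb hde using hd
  have hfsup : ∀ (s : Finset ℕ) (f : ℕ → C), (∀ i ∈ s, f i ∈ B1) → s.sup f ∈ B1 := by
    intro s f hf
    exact Finset.sup_induction hbot (fun x hx y hy => hsupm x hx y hy) hf
  set a' : ℕ → C := fun n => a n \ (Finset.range n).sup a with ha'def
  set b' : ℕ → C := fun n => b n \ (Finset.range n).sup b with hb'def
  have ha' : ∀ n, a' n ∈ B1 := fun n => by
    rw [ha'def]; simp only [sdiff_eq]
    exact hinfm _ (ha n) _ (hcomplm _ (hfsup _ _ fun i _ => ha i))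
  have hb' : ∀ n, b' n ∈ B1 := fun n => by
    rw [hb'def]; simp only [sdiff_eq]
    exact hinfm _ (hb n) _ (hcomplm _ (hfsup _ _ fun i _ => hb i))
  have hazd : ∀ m n, m ≠ n → (a m ⊓ z) ⊓ (a n ⊓ z) = ⊥ := by
    intro m n h
    have hm1 : a m ⊓ z ≤ d m := by rw [hde m]; exact le_sup_left
    have hn1 : a n ⊓ z ≤ d n := by rw [hde n]; exact le_sup_left
    exact disjoint_iff.mp ((hdisj m n h).mono hm1 hn1)
  have hbzd : ∀ m n, m ≠ n → (b m ⊓ zᶜ) ⊓ (b n ⊓ zᶜ) = ⊥ := by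
    intro m n h
    have hm1 : b m \ z ≤ d m := by rw [hde m]; exact le_sup_right
    have hn1 : b n \ z ≤ d n := by rw [hde n]; exact le_sup_right
    have h2 := disjoint_iff.mp ((hdisj m n h).mono hm1 hn1)
    rwa [sdiff_eq, sdiff_eq] at h2
  have ha'z : ∀ n, a' n ⊓ z = a n ⊓ z := fun n => key_trunc z a hazd n
  have hb'z : ∀ n, b' n \ z = b n \ z := fun n => by
    rw [hb'def, sdiff_eq, sdiff_eq]
    exact key_trunc zᶜ b hbzd n
  have hdisj' : ∀ (f : ℕ → C) (m n : ℕ), m < n →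
      Disjoint (f m \ (Finset.range m).sup f) (f n \ (Finset.range n).sup f) := by
    intro f m n hlt
    have h1 : f n \ (Finset.range n).sup f ≤ (f m)ᶜ := by
      rw [sdiff_eq]
      exact inf_le_right.trans (compl_le_compl (Finset.le_sup (Finset.mem_range.mpr hlt)))
    exact (disjoint_compl_right.mono_right h1).mono_left sdiff_le
  have hda' : ∀ m n, m ≠ n → Disjoint (a' m) (a' n) := by
    intro m n h
    rcases h.lt_or_gt with hlt | hlt
    · exact hdisj' a m n hlt
    · exact (hdisj' a n m hlt).symm
  have hdb' : ∀ m n, m ≠ n → Disjoint (b' m) (b' n) := by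
    intro m n h
    rcases h.lt_or_gt with hlt | hlt
    · exact hdisj' b m n hlt
    · exact (hdisj' b n m hlt).symm
  obtain ⟨u, hu, huprop⟩ := hcompact a' ha' hda'
  obtain ⟨v, hv, hvprop⟩ := hcompact b' hb' hdb'
  refine ⟨(u ⊓ z) ⊔ (v \ z), ⟨u, hu, v, hv, rfl⟩, ?_⟩
  intro n
  have hdn : ∀ k, d k = (a' k ⊓ z) ⊔ (b' k \ z) := by
    intro k; rw [hde k, ha'z k, hb'z k]
  constructor
  · rw [hdn, key_prod, (huprop n).1, (hvprop n).1]
    simp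
  · rw [hdn, key_prod, (huprop n).2, (hvprop n).2]
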